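/- For every positive constant x and positive integers N ≤ n, there exist sets S₀ ⊆ {v ∈ {0,1}^n : v_n = 0} and S₁ ⊆ {v ∈ {0,1}^n : v_n = 1}, each of size at most x·2^{n-1} / (b_{n-1}(⌊(N-1)/2⌋) + b_{n-1}(⌈(N-1)/2⌉ - 1)), together with a set T ⊆ {0,1}^n containing all vectors missed by S = S₀ ∪ S₁ with respect to coordinate n and closed under flipping coordinate n, such that (S, T) is a norm N-patched symmetric code and |T| ≤ 2^{n+1} ∑_{i=0}^{N-1} exp(-k(b_{n-1}(i-1)+b_{n-1}(N-i-1))/2^{n-1}) + 2^{n+1} exp(-k·b_{n-1}(N-1)/2^{n-1}), where k = ⌊x·2^{n-1} / (b_{n-1}(⌊(N-1)/2⌋) + b_{n-1}(⌈(N-1)/2⌉ - 1))⌋. -/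

import Mathlib

open Finset

abbrev Vec (n : ℕ) := Fin n → Bool

noncomputable def dS {n : ℕ} (x : Vec n) (Y : Set (Vec n)) : ℕ∞ :=
  ⨅ y ∈ Y, (hammingDist x y : ℕ∞)

noncomputable def dA {n : ℕ} (x : Vec n) (Y : Set (Vec n)) : ℕ∞ :=
  ⨅ y ∈ {y ∈ Y | ∀ i, x i ≤ y i}, (hammingDist x y : ℕ∞)

def sec {n : ℕ} (C : Set (Vec n)) (i : Fin n) (b : Bool) : Set (Vec n) :=
  {c ∈ C | c i = b}

def NormAt {n : ℕ} (C : Set (Vec n)) (i : Fin n) (N : ℕ) : Prop :=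
  ∀ x : Vec n, dS x (sec C i false) + dS x (sec C i true) ≤ (N : ℕ∞)

def AsymNormAt {n : ℕ} (C : Set (Vec n)) (i : Fin n) (N : ℕ) : Prop :=
  ∀ x : Vec n,
    (x i = false → dA x (sec C i false) + dA x (sec C i true) ≤ (N : ℕ∞)) ∧
    (x i = true → 2 * dA x (sec C i true) + 1 ≤ (N : ℕ∞))

def ads {nA nB : ℕ} (A : Set (Vec (nA+1))) (B : Set (Vec (nB+1))) :
    Set (Vec (nA+1+nB)) :=
  {z | ∃ (a : Fin nA → Bool) (t : Bool) (b : Fin nB → Bool),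
    Fin.snoc a t ∈ A ∧ Fin.cons t b ∈ B ∧ z = Fin.append (Fin.snoc a t) b}

def flipCoord {n : ℕ} (x : Vec n) (i : Fin n) : Vec n := Function.update x i (!x i)

def PatchedAt {n : ℕ} (S T : Set (Vec n)) (i : Fin n) (N : ℕ) : Prop :=
  ∀ x : Vec n, (dS x (sec S i false) + dS x (sec S i true) ≤ (N : ℕ∞))
    ∨ (x ∈ T ∧ flipCoord x i ∈ T)

def AsymPatchedAt {n : ℕ} (S T : Set (Vec n)) (i : Fin n) (N : ℕ) : Prop :=
  ∀ x : Vec n,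
    (x i = false → (dA x (sec S i false) + dA x (sec S i true) ≤ (N : ℕ∞))
       ∨ (x ∈ T ∧ flipCoord x i ∈ T)) ∧
    (x i = true → (2 * dA x (sec S i true) + 1 ≤ (N : ℕ∞)) ∨ x ∈ T)

/-- Ball size `b_m(r)` for integer radius, with `b_m(r) = 1` for `r < 0` by convention. -/
def bb (m : ℕ) (r : ℤ) : ℕ :=
  if r < 0 then 1 else ∑ i ∈ Finset.range (r.toNat + 1), m.choose i

/- ### Auxiliary lemmas -/

lemma bb_pos (m : ℕ) (r : ℤ) : 0 < bb m r := by
  unfold bb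
  split
  · norm_num
  · apply Finset.sum_pos'
    · intro i _; exact Nat.zero_le _
    · exact ⟨0, Finset.mem_range.2 (Nat.succ_pos _), Nat.choose_pos (Nat.zero_le _)⟩

lemma bb_ofNat (m s : ℕ) : bb m (s : ℤ) = ∑ i ∈ Finset.range (s + 1), m.choose i := by
  unfold bb
  rw [if_neg (by omega)]
  simp

lemma hd_eq {n : ℕ} (a b : Vec n) :
    hammingDist a b = (Finset.univ.filter fun i => a i ≠ b i).card := rfl

lemma dS_sum_le_iff {n : ℕ} (v : Vec n) (S₀ S₁ : Finset (Vec n)) (N : ℕ) :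
    dS v ↑S₀ + dS v ↑S₁ ≤ (N : ℕ∞) ↔
      ∃ u ∈ S₀, ∃ w ∈ S₁, hammingDist v u + hammingDist v w ≤ N := by
  constructor
  · intro h
    have h0 : dS v ↑S₀ ≠ ⊤ := by
      intro ht
      rw [ht, top_add] at h
      exact absurd h (by simp)
    have h1 : dS v ↑S₁ ≠ ⊤ := by
      intro ht
      rw [ht, add_top] at h
      exact absurd h (by simp)
    have hS0 : S₀.Nonempty := by
      by_contra he
      rw [not_nonempty_iff_eq_empty] at he
      subst he
      exact h0 (by simp [dS])
    have hS1 : S₁.Nonempty := by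
      by_contra he
      rw [not_nonempty_iff_eq_empty] at he
      subst he
      exact h1 (by simp [dS])
    obtain ⟨u, hu, hmin0⟩ := Finset.exists_min_image S₀ (fun u => hammingDist v u) hS0
    obtain ⟨w, hw, hmin1⟩ := Finset.exists_min_image S₁ (fun u => hammingDist v u) hS1
    refine ⟨u, hu, w, hw, ?_⟩
    have e0 : dS v ↑S₀ = (hammingDist v u : ℕ∞) := by
      apply le_antisymm (iInf₂_le u (by exact_mod_cast hu))
      apply le_iInf₂
      intro y hy
      exact_mod_cast Nat.cast_le.2 (hmin0 y (by exact_mod_cast hy))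
    have e1 : dS v ↑S₁ = (hammingDist v w : ℕ∞) := by
      apply le_antisymm (iInf₂_le w (by exact_mod_cast hw))
      apply le_iInf₂
      intro y hy
      exact_mod_cast Nat.cast_le.2 (hmin1 y (by exact_mod_cast hy))
    rw [e0, e1, ← Nat.cast_add, Nat.cast_le] at h
    exact h
  · rintro ⟨u, hu, w, hw, hd⟩
    calc dS v ↑S₀ + dS v ↑S₁ ≤ (hammingDist v u : ℕ∞) + (hammingDist v w : ℕ∞) :=
          add_le_add (iInf₂_le u (by exact_mod_cast hu)) (iInf₂_le w (by exact_mod_cast hw))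
      _ ≤ (N : ℕ∞) := by exact_mod_cast Nat.cast_le.2 hd

lemma hd_flip {n : ℕ} (a b : Vec n) (i : Fin n) :
    hammingDist (flipCoord a i) b + (if a i = b i then 0 else 1)
      = hammingDist a b + (if a i = b i then 1 else 0) := by
  rw [hd_eq, hd_eq]
  have key : ∀ j, j ≠ i → (flipCoord a i j = b j ↔ a j = b j) := by
    intro j hj
    rw [flipCoord, Function.update_of_ne hj]
  by_cases h : a i = b i
  · rw [if_pos h, if_pos h]
    have : (Finset.univ.filter fun j => flipCoord a i j ≠ b j)
        = insert i (Finset.univ.filter fun j => a j ≠ b j) := by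
      ext j
      by_cases hj : j = i
      · subst hj
        simp [flipCoord, h]
      · simp [hj, key j hj]
    rw [this, Finset.card_insert_of_notMem (by simp [h])]
  · rw [if_neg h, if_neg h]
    have : (Finset.univ.filter fun j => a j ≠ b j)
        = insert i (Finset.univ.filter fun j => flipCoord a i j ≠ b j) := by
      ext j
      by_cases hj : j = i
      · simp only [hj, mem_insert, mem_filter, mem_univ, true_and, true_or, iff_true]
        exact h
      · simp [hj, key j hj]
    rw [this, Finset.card_insert_of_notMem
      (by simp only [mem_filter, mem_univ, true_and]; simp only [flipCoord, Function.update_self, ne_eq,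
            not_not]; cases ha : a i <;> cases hb : b i <;> simp_all)]

lemma flip_pair_sum {n : ℕ} (v u w : Vec n) (i : Fin n)
    (hu : u i = false) (hw : w i = true) :
    hammingDist (flipCoord v i) u + hammingDist (flipCoord v i) w
      = hammingDist v u + hammingDist v w := by
  have h1 := hd_flip v u i
  have h2 := hd_flip v w i
  cases hv : v i <;> simp [hv, hu, hw] at h1 h2 <;> omega

lemma one_le_dist {n : ℕ} (v w : Vec n) (i : Fin n) (hne : v i ≠ w i) :
    1 ≤ hammingDist v w := by
  have hvw : v ≠ w := fun h => hne (by rw [h])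
  have h0 : hammingDist v w ≠ 0 := fun h => hvw (hammingDist_eq_zero.1 h)
  omega

lemma powerset_filter_card (α : Type*) [DecidableEq α] (s : Finset α) (r : ℕ) :
    (s.powerset.filter fun t => t.card ≤ r).card = ∑ j ∈ range (r+1), (s.card).choose j := by
  have he : (s.powerset.filter fun t => t.card ≤ r)
      = (range (r+1)).biUnion (fun j => s.powersetCard j) := by
    ext t
    simp only [mem_filter, mem_powerset, mem_biUnion, mem_range, mem_powersetCard]
    constructor
    · rintro ⟨h1, h2⟩; exact ⟨t.card, by omega, h1, rfl⟩
    · rintro ⟨j, hj, h1, h2⟩; exact ⟨h1, by omega⟩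
  rw [he, card_biUnion]
  · exact Finset.sum_congr rfl fun j _ => card_powersetCard j s
  · intro a _ b _ hab
    apply Finset.disjoint_left.2
    intro t ht ht'
    rw [mem_powersetCard] at ht ht'
    omega

lemma ball_count {n : ℕ} (v : Vec n) (i : Fin n) (b : Bool) (s : ℕ) :
    2 * ∑ t ∈ range (s+1), (n-1).choose t ≤
      (Finset.univ.filter fun x : Vec n =>
        hammingDist v (Function.update x i b) ≤ s + (if v i = b then 0 else 1)).card := by
  classical
  set D := (((Finset.univ : Finset (Fin n)).erase i).powerset.filter fun A => A.card ≤ s)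
      ×ˢ (Finset.univ : Finset Bool) with hD
  have hcardD : D.card = 2 * ∑ t ∈ range (s+1), (n-1).choose t := by
    rw [hD, card_product, powerset_filter_card]
    simp [card_erase_of_mem, mul_comm]
  rw [← hcardD]
  apply Finset.card_le_card_of_injOn
    (fun p => Function.update (fun j => if j ∈ p.1 then !v j else v j) i p.2)
  · rintro ⟨A, t⟩ hp
    simp only [Finset.mem_coe, hD, mem_product, mem_filter, mem_powerset] at hp
    obtain ⟨⟨hAsub, hAcard⟩, -⟩ := hp
    have hiA : i ∉ A := fun h => (Finset.mem_erase.1 (hAsub h)).1 rfl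
    simp only [Finset.mem_coe, mem_filter, mem_univ, true_and]
    rw [Function.update_idem]
    have : (Finset.univ.filter fun j => v j ≠ Function.update
        (fun j => if j ∈ A then !v j else v j) i b j)
        = if v i = b then A else insert i A := by
      ext j
      by_cases hj : j = i
      · subst hj
        by_cases hvb : v j = b <;> simp [hvb, hiA, Function.update_self]
      · have : Function.update (fun j => if j ∈ A then !v j else v j) i b j
            = if j ∈ A then !v j else v j := Function.update_of_ne hj _ _
        rw [mem_filter]
        rw [this]
        by_cases hjA : j ∈ A <;> by_cases hvb : v i = b <;>
          simp [hjA, hvb, hj, Bool.eq_not_self]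
    rw [hd_eq, this]
    by_cases hvb : v i = b
    · simp only [hvb, if_true]
      omega
    · simp only [hvb, if_false]
      rw [card_insert_of_notMem hiA]
      omega
  · rintro ⟨A, t⟩ hp ⟨A', t'⟩ hp' heq
    simp only [Finset.mem_coe, hD, mem_product, mem_filter, mem_powerset] at hp hp'
    have hiA : i ∉ A := fun h => (Finset.mem_erase.1 (hp.1.1 h)).1 rfl
    have hiA' : i ∉ A' := fun h => (Finset.mem_erase.1 (hp'.1.1 h)).1 rfl
    have ht : t = t' := by
      have := congrFun heq i
      simpa [Function.update_self] using this
    have hA : A = A' := by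
      ext j
      by_cases hj : j = i
      · subst hj; simp [hiA, hiA']
      · have h1 := congrFun heq j
        simp only [Function.update_of_ne hj] at h1
        by_cases hjA : j ∈ A <;> by_cases hjA' : j ∈ A' <;>
          simp_all [Bool.eq_not_self]
    simp [ht, hA]

/-- The preimage "avoid set" on one side. -/
def XX {n : ℕ} (v : Vec n) (i₀ : Fin n) (b : Bool) (r : ℕ) : Finset (Vec n) :=
  Finset.univ.filter fun y => hammingDist v (Function.update y i₀ b) ≤ r

lemma XX_card {n : ℕ} (v : Vec n) (i₀ : Fin n) (b : Bool) (hvb : v i₀ = b) (s : ℕ) :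
    2 * bb (n-1) (s : ℤ) ≤ (XX v i₀ b s).card := by
  rw [bb_ofNat]
  have h := ball_count v i₀ b s
  rw [if_pos hvb] at h
  simpa [XX] using h

lemma XX_card' {n : ℕ} (v : Vec n) (i₀ : Fin n) (b : Bool) (hvb : v i₀ ≠ b) (s : ℕ) :
    2 * bb (n-1) (s : ℤ) ≤ (XX v i₀ b (s+1)).card := by
  rw [bb_ofNat]
  have h := ball_count v i₀ b s
  rw [if_neg hvb] at h
  simpa [XX] using h

lemma card_vec (n : ℕ) : Fintype.card (Vec n) = 2^n := by simp

lemma avoid_count {n k : ℕ} (X : Finset (Vec n)) :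
    (Finset.univ.filter fun f : Fin k → Vec n => ∀ j, f j ∉ X).card = (2^n - X.card)^k := by
  classical
  have he : (Finset.univ.filter fun f : Fin k → Vec n => ∀ j, f j ∉ X)
      = Fintype.piFinset (fun _ : Fin k => Xᶜ) := by
    ext f
    simp [Fintype.mem_piFinset]
  rw [he, Fintype.card_piFinset]
  simp [Finset.card_compl, card_vec]

/-- Product event. -/
def EV {n : ℕ} (k : ℕ) (P Q : Finset (Vec n)) :
    Finset ((Fin k → Vec n) × (Fin k → Vec n)) :=
  Finset.univ.filter fun ω => (∀ j, ω.1 j ∉ P) ∧ (∀ j, ω.2 j ∉ Q)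

lemma event_count {n k : ℕ} (P Q : Finset (Vec n)) :
    (EV k P Q).card = (2^n - P.card)^k * (2^n - Q.card)^k := by
  classical
  rw [EV]
  have : (Finset.univ : Finset ((Fin k → Vec n) × (Fin k → Vec n)))
      = Finset.univ ×ˢ Finset.univ := Finset.univ_product_univ.symm
  rw [this, Finset.filter_product (fun f : Fin k → Vec n => ∀ j, f j ∉ P)
    (fun g : Fin k → Vec n => ∀ j, g j ∉ Q), Finset.card_product, avoid_count, avoid_count]

lemma count_le_exp {n k c : ℕ} (hn : 1 ≤ n) (X : Finset (Vec n)) (hc : 2*c ≤ X.card) :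
    (((2^n - X.card : ℕ) : ℝ))^k ≤ (2^n : ℝ)^k * Real.exp (-((k : ℝ) * c) / 2^(n-1)) := by
  have hXle : X.card ≤ 2^n := by
    calc X.card ≤ Fintype.card (Vec n) := Finset.card_le_univ X
    _ = 2^n := card_vec n
  have h2c : 2*c ≤ 2^n := le_trans hc hXle
  have hM : (0:ℝ) < (2:ℝ)^n := by positivity
  have step1 : (((2^n - X.card : ℕ) : ℝ)) ≤ (2:ℝ)^n - 2*c := by
    have : (2^n - X.card : ℕ) ≤ 2^n - 2*c := Nat.sub_le_sub_left hc _
    calc (((2^n - X.card : ℕ) : ℝ)) ≤ ((2^n - 2*c : ℕ) : ℝ) := by exact_mod_cast this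
      _ = (2:ℝ)^n - 2*c := by
          push_cast [Nat.cast_sub h2c]
          ring
  have step2 : (2:ℝ)^n - 2*c ≤ (2:ℝ)^n * Real.exp (-(2*c) / 2^n) := by
    have h := Real.add_one_le_exp (-(2*(c:ℝ)) / 2^n)
    have := mul_le_mul_of_nonneg_left h (le_of_lt hM)
    calc (2:ℝ)^n - 2*c = (2:ℝ)^n * (-(2*(c:ℝ)) / 2^n + 1) := by
          field_simp
          ring
      _ ≤ (2:ℝ)^n * Real.exp (-(2*c) / 2^n) := this
  have hbase : (0:ℝ) ≤ (((2^n - X.card : ℕ) : ℝ)) := Nat.cast_nonneg _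
  have hpow : (((2^n - X.card : ℕ) : ℝ))^k ≤ ((2:ℝ)^n * Real.exp (-(2*c) / 2^n))^k := by
    apply pow_le_pow_left₀ hbase (le_trans step1 step2)
  calc (((2^n - X.card : ℕ) : ℝ))^k ≤ ((2:ℝ)^n * Real.exp (-(2*c) / 2^n))^k := hpow
    _ = (2^n : ℝ)^k * Real.exp (-(2*(c:ℝ)) / 2^n * k) := by
        rw [mul_pow, ← Real.exp_nat_mul]
        ring_nf
    _ = (2^n : ℝ)^k * Real.exp (-((k : ℝ) * c) / 2^(n-1)) := by
        congr 1
        have h2 : (2:ℝ)^n = 2^(n-1) * 2 := by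
          rw [← pow_succ]
          congr 1
          omega
        rw [h2]
        have h1 : (0:ℝ) < (2:ℝ)^(n-1) := by positivity
        field_simp

lemma event_bound {n : ℕ} (k : ℕ) (hn : 1 ≤ n) (P Q : Finset (Vec n)) (cP cQ : ℕ)
    (hP : 2*cP ≤ P.card) (hQ : 2*cQ ≤ Q.card) :
    ((EV k P Q).card : ℝ)
      ≤ (2^n:ℝ)^k * (2^n:ℝ)^k * Real.exp (-((k:ℝ) * ((cP + cQ : ℕ):ℝ)) / 2^(n-1)) := by
  rw [event_count]
  push_cast [Nat.cast_mul, Nat.cast_pow]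
  calc ((2^n - P.card : ℕ):ℝ)^k * ((2^n - Q.card : ℕ):ℝ)^k
      ≤ ((2^n : ℝ)^k * Real.exp (-((k:ℝ) * cP) / 2^(n-1)))
        * ((2^n : ℝ)^k * Real.exp (-((k:ℝ) * cQ) / 2^(n-1))) := by
        apply mul_le_mul (count_le_exp hn P hP) (count_le_exp hn Q hQ)
          (by positivity) (by positivity)
    _ = (2^n:ℝ)^k * (2^n:ℝ)^k
        * (Real.exp (-((k:ℝ) * cP) / 2^(n-1)) * Real.exp (-((k:ℝ) * cQ) / 2^(n-1))) := by
        ring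
    _ = (2^n:ℝ)^k * (2^n:ℝ)^k * Real.exp (-((k:ℝ) * ((cP:ℝ) + (cQ:ℝ))) / 2^(n-1)) := by
        rw [← Real.exp_add]
        congr 1
        ring

lemma cover {n : ℕ} (N : ℕ) (hN : 1 ≤ N) (v : Vec n) (Sa Sb : Finset (Vec n))
    (hb : ∀ w ∈ Sb, 1 ≤ hammingDist v w)
    (hBad : ¬ ∃ u ∈ Sa, ∃ w ∈ Sb, hammingDist v u + hammingDist v w ≤ N) :
    (∀ w ∈ Sb, ¬ hammingDist v w ≤ N) ∨
    (∀ u ∈ Sa, ¬ hammingDist v u ≤ N - 1) ∨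
    (∃ j ∈ Finset.Ico 1 N, (∀ u ∈ Sa, ¬ hammingDist v u ≤ N - j - 1) ∧
       (∀ w ∈ Sb, ¬ hammingDist v w ≤ j)) := by
  push_neg at hBad
  by_cases hball : ∀ w ∈ Sb, ¬ hammingDist v w ≤ N
  · left; exact hball
  push_neg at hball
  obtain ⟨w₀, hw₀, hw₀d⟩ := hball
  obtain ⟨w, hw, hwmin⟩ := Finset.exists_min_image Sb (fun w => hammingDist v w) ⟨w₀, hw₀⟩
  have hw1 : 1 ≤ hammingDist v w := hb w hw
  have hwN : hammingDist v w ≤ N := le_trans (hwmin w₀ hw₀) hw₀d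
  have hSa : ∀ u ∈ Sa, N + 1 - hammingDist v w ≤ hammingDist v u := by
    intro u hu
    have := hBad u hu w hw
    omega
  by_cases h1 : hammingDist v w = 1
  · right; left
    intro u hu
    have := hSa u hu
    omega
  · right; right
    refine ⟨hammingDist v w - 1, ?_, ?_, ?_⟩
    · rw [Finset.mem_Ico]; omega
    · intro u hu; have := hSa u hu; omega
    · intro w' hw'; have := hwmin w' hw'; omega

lemma avoid_image {n k : ℕ} (v : Vec n) (i₀ : Fin n) (b : Bool) (r : ℕ) (f : Fin k → Vec n)
    (h : ∀ u ∈ Finset.univ.image (fun j => Function.update (f j) i₀ b),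
      ¬ hammingDist v u ≤ r) :
    ∀ j, f j ∉ XX v i₀ b r := by
  intro j hj
  rw [XX, Finset.mem_filter] at hj
  exact h _ (Finset.mem_image.2 ⟨j, Finset.mem_univ _, rfl⟩) hj.2

lemma mem_EV {n k : ℕ} {P Q : Finset (Vec n)} {ω : (Fin k → Vec n) × (Fin k → Vec n)} :
    ω ∈ EV k P Q ↔ (∀ j, ω.1 j ∉ P) ∧ (∀ j, ω.2 j ∉ Q) := by
  unfold EV
  simp

def badP {n : ℕ} (N : ℕ) (i₀ : Fin n) {k : ℕ}
    (ω : (Fin k → Vec n) × (Fin k → Vec n)) (v : Vec n) : Prop :=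
  ¬ ∃ u ∈ Finset.univ.image (fun j => Function.update (ω.1 j) i₀ false),
      ∃ w ∈ Finset.univ.image (fun j => Function.update (ω.2 j) i₀ true),
        hammingDist v u + hammingDist v w ≤ N

instance badP.dec {n : ℕ} (N : ℕ) (i₀ : Fin n) {k : ℕ}
    (ω : (Fin k → Vec n) × (Fin k → Vec n)) (v : Vec n) : Decidable (badP N i₀ ω v) := by
  unfold badP; infer_instance

def TT (n N k : ℕ) (i₀ : Fin n) (ω : (Fin k → Vec n) × (Fin k → Vec n)) : Finset (Vec n) :=
  Finset.univ.filter fun v => badP N i₀ ω v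

def WW (n N k : ℕ) (i₀ : Fin n) (v : Vec n) :
    Finset ((Fin k → Vec n) × (Fin k → Vec n)) :=
  Finset.univ.filter fun ω => badP N i₀ ω v

lemma mem_TT {n N k : ℕ} {i₀ : Fin n} {ω : (Fin k → Vec n) × (Fin k → Vec n)} {v : Vec n} :
    v ∈ TT n N k i₀ ω ↔
      ¬ ∃ u ∈ Finset.univ.image (fun j => Function.update (ω.1 j) i₀ false),
        ∃ w ∈ Finset.univ.image (fun j => Function.update (ω.2 j) i₀ true),
          hammingDist v u + hammingDist v w ≤ N := by
  unfold TT
  rw [Finset.mem_filter]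
  exact ⟨fun h => h.2, fun h => ⟨Finset.mem_univ _, h⟩⟩

lemma mem_WW {n N k : ℕ} {i₀ : Fin n} {v : Vec n} {ω : (Fin k → Vec n) × (Fin k → Vec n)} :
    ω ∈ WW n N k i₀ v ↔
      ¬ ∃ u ∈ Finset.univ.image (fun j => Function.update (ω.1 j) i₀ false),
        ∃ w ∈ Finset.univ.image (fun j => Function.update (ω.2 j) i₀ true),
          hammingDist v u + hammingDist v w ≤ N := by
  unfold WW
  rw [Finset.mem_filter]
  exact ⟨fun h => h.2, fun h => ⟨Finset.mem_univ _, h⟩⟩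

lemma TT_swap (n N k : ℕ) (i₀ : Fin n) :
    ∑ ω : (Fin k → Vec n) × (Fin k → Vec n), (TT n N k i₀ ω).card
      = ∑ v : Vec n, (WW n N k i₀ v).card := by
  unfold TT WW
  simp only [Finset.card_filter]
  exact Finset.sum_comm

lemma exists_good (n N k : ℕ) (hn : 1 ≤ n) (hN : 1 ≤ N) (i₀ : Fin n) :
    ∃ ω : (Fin k → Vec n) × (Fin k → Vec n),
      ((TT n N k i₀ ω).card : ℝ) ≤
      2^(n+1) * ((∑ i ∈ Finset.range N, Real.exp (-((k:ℝ) *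
          ((bb (n-1) ((i:ℤ)-1) + bb (n-1) ((N:ℤ)-i-1) : ℕ):ℝ)) / 2^(n-1)))
        + Real.exp (-((k:ℝ) * ((bb (n-1) ((N:ℤ)-1) : ℕ):ℝ)) / 2^(n-1))) := by
  classical
  set Exp : ℕ → ℝ := fun c => Real.exp (-((k:ℝ) * (c:ℝ)) / 2^(n-1)) with hExp
  have hExpPos : ∀ c, 0 < Exp c := fun c => Real.exp_pos _
  set K2 : ℝ := (2^n:ℝ)^k * (2^n:ℝ)^k with hK2
  have hK2pos : 0 < K2 := by positivity
  have hNZ : ((N:ℤ) - 1) = ((N - 1 : ℕ) : ℤ) := by omega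
  -- per-vector counting bound
  have perv : ∀ v : Vec n,
      ((WW n N k i₀ v).card : ℝ) ≤
      K2 * (2 * Exp (bb (n-1) ((N:ℤ)-1))
        + ∑ j ∈ Finset.Ico 1 N, Exp (bb (n-1) ((j:ℤ)-1) + bb (n-1) ((N:ℤ)-j-1))) := by
    intro v
    -- distances to the opposite-parity side are positive
    have hdiff : ∀ (b : Bool), v i₀ ≠ b → ∀ (f : Fin k → Vec n),
        ∀ w ∈ Finset.univ.image (fun j => Function.update (f j) i₀ b),
          1 ≤ hammingDist v w := by
      intro b hvb f w hw
      rw [Finset.mem_image] at hw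
      obtain ⟨j, -, rfl⟩ := hw
      exact one_le_dist v _ i₀ (by rw [Function.update_self]; exact hvb)
    cases hv : v i₀
    · -- v i₀ = false : same side is the first component
      set Ea := EV k (∅ : Finset (Vec n)) (XX v i₀ true N) with hEa
      set Eb := EV k (XX v i₀ false (N-1)) (∅ : Finset (Vec n)) with hEb
      set Ej : ℕ → Finset ((Fin k → Vec n) × (Fin k → Vec n)) :=
        fun j => EV k (XX v i₀ false (N-j-1)) (XX v i₀ true j) with hEj
      have hsub : WW n N k i₀ v ⊆ (Ea ∪ Eb) ∪ (Finset.Ico 1 N).biUnion Ej := by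
        intro ω hω
        have hBad := mem_WW.1 hω
        have hb := hdiff true (by rw [hv]; simp) ω.2
        rcases cover N hN v _ _ hb hBad with h | h | ⟨j, hj, h1, h2⟩
        · refine Finset.mem_union_left _ (Finset.mem_union_left _ ?_)
          exact mem_EV.2 ⟨fun j => Finset.notMem_empty _, avoid_image v i₀ true N ω.2 h⟩
        · refine Finset.mem_union_left _ (Finset.mem_union_right _ ?_)
          exact mem_EV.2 ⟨avoid_image v i₀ false (N-1) ω.1 h, fun j => Finset.notMem_empty _⟩
        · refine Finset.mem_union_right _ (Finset.mem_biUnion.2 ⟨j, hj, ?_⟩)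
          exact mem_EV.2 ⟨avoid_image v i₀ false (N-j-1) ω.1 h1, avoid_image v i₀ true j ω.2 h2⟩
      have hNat : (WW n N k i₀ v).card ≤ Ea.card + Eb.card + ∑ j ∈ Finset.Ico 1 N, (Ej j).card := by
        have h1 := Finset.card_le_card hsub
        have h2 := Finset.card_union_le (Ea ∪ Eb) ((Finset.Ico 1 N).biUnion Ej)
        have h3 := Finset.card_union_le Ea Eb
        have h4 := Finset.card_biUnion_le (s := Finset.Ico 1 N) (t := Ej)
        omega
      have hcard : ((WW n N k i₀ v).card : ℝ)
          ≤ (Ea.card : ℝ) + (Eb.card : ℝ) + ∑ j ∈ Finset.Ico 1 N, ((Ej j).card : ℝ) := by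
        calc ((WW n N k i₀ v).card : ℝ)
            ≤ ((Ea.card + Eb.card + ∑ j ∈ Finset.Ico 1 N, (Ej j).card : ℕ) : ℝ) :=
              Nat.cast_le.2 hNat
          _ = _ := by push_cast; ring
      -- bound each event
      have bEa : (Ea.card : ℝ) ≤ K2 * Exp (bb (n-1) ((N:ℤ)-1)) := by
        have hQ : 2 * bb (n-1) ((N:ℤ)-1) ≤ (XX v i₀ true N).card := by
          rw [hNZ]
          have := XX_card' v i₀ true (by rw [hv]; simp) (N-1)
          rwa [show N - 1 + 1 = N by omega] at this
        have := event_bound k hn (∅ : Finset (Vec n)) (XX v i₀ true N) 0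
          (bb (n-1) ((N:ℤ)-1)) (by simp) hQ
        rw [hEa]
        refine le_trans this (le_of_eq ?_)
        rw [hK2, hExp]
        norm_num
      have bEb : (Eb.card : ℝ) ≤ K2 * Exp (bb (n-1) ((N:ℤ)-1)) := by
        have hP : 2 * bb (n-1) ((N:ℤ)-1) ≤ (XX v i₀ false (N-1)).card := by
          rw [hNZ]
          exact XX_card v i₀ false hv (N-1)
        have := event_bound k hn (XX v i₀ false (N-1)) (∅ : Finset (Vec n))
          (bb (n-1) ((N:ℤ)-1)) 0 hP (by simp)
        rw [hEb]
        refine le_trans this (le_of_eq ?_)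
        rw [hK2, hExp]
        norm_num
      have bEj : ∀ j ∈ Finset.Ico 1 N, ((Ej j).card : ℝ)
          ≤ K2 * Exp (bb (n-1) ((j:ℤ)-1) + bb (n-1) ((N:ℤ)-j-1)) := by
        intro j hj
        rw [Finset.mem_Ico] at hj
        have e1 : ((N:ℤ) - j - 1) = ((N - j - 1 : ℕ) : ℤ) := by omega
        have e2 : ((j:ℤ) - 1) = ((j - 1 : ℕ) : ℤ) := by omega
        have hP : 2 * bb (n-1) ((N:ℤ)-j-1) ≤ (XX v i₀ false (N-j-1)).card := by
          rw [e1]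
          exact XX_card v i₀ false hv (N-j-1)
        have hQ : 2 * bb (n-1) ((j:ℤ)-1) ≤ (XX v i₀ true j).card := by
          rw [e2]
          have := XX_card' v i₀ true (by rw [hv]; simp) (j-1)
          rwa [show j - 1 + 1 = j by omega] at this
        have := event_bound k hn (XX v i₀ false (N-j-1)) (XX v i₀ true j)
          (bb (n-1) ((N:ℤ)-j-1)) (bb (n-1) ((j:ℤ)-1)) hP hQ
        rw [hEj]
        refine le_trans this (le_of_eq ?_)
        rw [hK2, hExp]
        rw [show bb (n-1) ((N:ℤ)-j-1) + bb (n-1) ((j:ℤ)-1)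
          = bb (n-1) ((j:ℤ)-1) + bb (n-1) ((N:ℤ)-j-1) from Nat.add_comm _ _]
      calc ((WW n N k i₀ v).card : ℝ)
          ≤ (Ea.card : ℝ) + (Eb.card : ℝ) + ∑ j ∈ Finset.Ico 1 N, ((Ej j).card : ℝ) := hcard
        _ ≤ K2 * Exp (bb (n-1) ((N:ℤ)-1)) + K2 * Exp (bb (n-1) ((N:ℤ)-1))
            + ∑ j ∈ Finset.Ico 1 N, K2 * Exp (bb (n-1) ((j:ℤ)-1) + bb (n-1) ((N:ℤ)-j-1)) := by
            exact add_le_add (add_le_add bEa bEb) (Finset.sum_le_sum bEj)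
        _ = K2 * (2 * Exp (bb (n-1) ((N:ℤ)-1))
            + ∑ j ∈ Finset.Ico 1 N, Exp (bb (n-1) ((j:ℤ)-1) + bb (n-1) ((N:ℤ)-j-1))) := by
            rw [← Finset.mul_sum]
            ring
    · -- v i₀ = true : same side is the second component
      set Ea := EV k (XX v i₀ false N) (∅ : Finset (Vec n)) with hEa
      set Eb := EV k (∅ : Finset (Vec n)) (XX v i₀ true (N-1)) with hEb
      set Ej : ℕ → Finset ((Fin k → Vec n) × (Fin k → Vec n)) :=
        fun j => EV k (XX v i₀ false j) (XX v i₀ true (N-j-1)) with hEj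
      have hsub : WW n N k i₀ v ⊆ (Ea ∪ Eb) ∪ (Finset.Ico 1 N).biUnion Ej := by
        intro ω hω
        have hBad := mem_WW.1 hω
        have hBad' : ¬ ∃ u ∈ Finset.univ.image (fun j => Function.update (ω.2 j) i₀ true),
            ∃ w ∈ Finset.univ.image (fun j => Function.update (ω.1 j) i₀ false),
              hammingDist v u + hammingDist v w ≤ N := by
          rintro ⟨u, hu, w, hw, hle⟩
          exact hBad ⟨w, hw, u, hu, by omega⟩
        have hb := hdiff false (by rw [hv]; simp) ω.1
        rcases cover N hN v _ _ hb hBad' with h | h | ⟨j, hj, h1, h2⟩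
        · refine Finset.mem_union_left _ (Finset.mem_union_left _ ?_)
          exact mem_EV.2 ⟨avoid_image v i₀ false N ω.1 h, fun j => Finset.notMem_empty _⟩
        · refine Finset.mem_union_left _ (Finset.mem_union_right _ ?_)
          exact mem_EV.2 ⟨fun j => Finset.notMem_empty _, avoid_image v i₀ true (N-1) ω.2 h⟩
        · refine Finset.mem_union_right _ (Finset.mem_biUnion.2 ⟨j, hj, ?_⟩)
          exact mem_EV.2 ⟨avoid_image v i₀ false j ω.1 h2, avoid_image v i₀ true (N-j-1) ω.2 h1⟩
      have hNat : (WW n N k i₀ v).card ≤ Ea.card + Eb.card + ∑ j ∈ Finset.Ico 1 N, (Ej j).card := by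
        have h1 := Finset.card_le_card hsub
        have h2 := Finset.card_union_le (Ea ∪ Eb) ((Finset.Ico 1 N).biUnion Ej)
        have h3 := Finset.card_union_le Ea Eb
        have h4 := Finset.card_biUnion_le (s := Finset.Ico 1 N) (t := Ej)
        omega
      have hcard : ((WW n N k i₀ v).card : ℝ)
          ≤ (Ea.card : ℝ) + (Eb.card : ℝ) + ∑ j ∈ Finset.Ico 1 N, ((Ej j).card : ℝ) := by
        calc ((WW n N k i₀ v).card : ℝ)
            ≤ ((Ea.card + Eb.card + ∑ j ∈ Finset.Ico 1 N, (Ej j).card : ℕ) : ℝ) :=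
              Nat.cast_le.2 hNat
          _ = _ := by push_cast; ring
      have bEa : (Ea.card : ℝ) ≤ K2 * Exp (bb (n-1) ((N:ℤ)-1)) := by
        have hP : 2 * bb (n-1) ((N:ℤ)-1) ≤ (XX v i₀ false N).card := by
          rw [hNZ]
          have := XX_card' v i₀ false (by rw [hv]; simp) (N-1)
          rwa [show N - 1 + 1 = N by omega] at this
        have := event_bound k hn (XX v i₀ false N) (∅ : Finset (Vec n))
          (bb (n-1) ((N:ℤ)-1)) 0 hP (by simp)
        rw [hEa]
        refine le_trans this (le_of_eq ?_)
        rw [hK2, hExp]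
        norm_num
      have bEb : (Eb.card : ℝ) ≤ K2 * Exp (bb (n-1) ((N:ℤ)-1)) := by
        have hQ : 2 * bb (n-1) ((N:ℤ)-1) ≤ (XX v i₀ true (N-1)).card := by
          rw [hNZ]
          exact XX_card v i₀ true hv (N-1)
        have := event_bound k hn (∅ : Finset (Vec n)) (XX v i₀ true (N-1)) 0
          (bb (n-1) ((N:ℤ)-1)) (by simp) hQ
        rw [hEb]
        refine le_trans this (le_of_eq ?_)
        rw [hK2, hExp]
        norm_num
      have bEj : ∀ j ∈ Finset.Ico 1 N, ((Ej j).card : ℝ)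
          ≤ K2 * Exp (bb (n-1) ((j:ℤ)-1) + bb (n-1) ((N:ℤ)-j-1)) := by
        intro j hj
        rw [Finset.mem_Ico] at hj
        have e1 : ((N:ℤ) - j - 1) = ((N - j - 1 : ℕ) : ℤ) := by omega
        have e2 : ((j:ℤ) - 1) = ((j - 1 : ℕ) : ℤ) := by omega
        have hP : 2 * bb (n-1) ((j:ℤ)-1) ≤ (XX v i₀ false j).card := by
          rw [e2]
          have := XX_card' v i₀ false (by rw [hv]; simp) (j-1)
          rwa [show j - 1 + 1 = j by omega] at this
        have hQ : 2 * bb (n-1) ((N:ℤ)-j-1) ≤ (XX v i₀ true (N-j-1)).card := by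
          rw [e1]
          exact XX_card v i₀ true hv (N-j-1)
        have := event_bound k hn (XX v i₀ false j) (XX v i₀ true (N-j-1))
          (bb (n-1) ((j:ℤ)-1)) (bb (n-1) ((N:ℤ)-j-1)) hP hQ
        rw [hEj]
        exact le_trans this (le_of_eq (by rw [hK2, hExp]))
      calc ((WW n N k i₀ v).card : ℝ)
          ≤ (Ea.card : ℝ) + (Eb.card : ℝ) + ∑ j ∈ Finset.Ico 1 N, ((Ej j).card : ℝ) := hcard
        _ ≤ K2 * Exp (bb (n-1) ((N:ℤ)-1)) + K2 * Exp (bb (n-1) ((N:ℤ)-1))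
            + ∑ j ∈ Finset.Ico 1 N, K2 * Exp (bb (n-1) ((j:ℤ)-1) + bb (n-1) ((N:ℤ)-j-1)) := by
            exact add_le_add (add_le_add bEa bEb) (Finset.sum_le_sum bEj)
        _ = K2 * (2 * Exp (bb (n-1) ((N:ℤ)-1))
            + ∑ j ∈ Finset.Ico 1 N, Exp (bb (n-1) ((j:ℤ)-1) + bb (n-1) ((N:ℤ)-j-1))) := by
            rw [← Finset.mul_sum]
            ring
  -- sum over the whole space and average
  set B : ℝ := (∑ i ∈ Finset.range N, Real.exp (-((k:ℝ) *
      ((bb (n-1) ((i:ℤ)-1) + bb (n-1) ((N:ℤ)-i-1) : ℕ):ℝ)) / 2^(n-1)))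
    + Real.exp (-((k:ℝ) * ((bb (n-1) ((N:ℤ)-1) : ℕ):ℝ)) / 2^(n-1)) with hB
  have hsum : (∑ ω : (Fin k → Vec n) × (Fin k → Vec n), ((TT n N k i₀ ω).card : ℝ))
      ≤ ∑ _ω : (Fin k → Vec n) × (Fin k → Vec n), 2^(n+1) * B := by
    rw [← Nat.cast_sum, TT_swap, Nat.cast_sum]
    have step : ∑ v : Vec n, ((WW n N k i₀ v).card : ℝ)
        ≤ ∑ _v : Vec n, K2 * (2 * Exp (bb (n-1) ((N:ℤ)-1))
          + ∑ j ∈ Finset.Ico 1 N, Exp (bb (n-1) ((j:ℤ)-1) + bb (n-1) ((N:ℤ)-j-1))) :=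
      Finset.sum_le_sum (fun v _ => perv v)
    refine le_trans step ?_
    rw [Finset.sum_const, Finset.sum_const]
    have hcards : (Finset.univ : Finset (Vec n)).card = 2^n := by
      rw [Finset.card_univ, card_vec]
    have hcardΩ : (Finset.univ : Finset ((Fin k → Vec n) × (Fin k → Vec n))).card
        = (2^n)^k * (2^n)^k := by
      rw [Finset.card_univ]
      simp [Fintype.card_prod, Fintype.card_fun, card_vec]
    rw [hcards, hcardΩ, nsmul_eq_mul, nsmul_eq_mul]
    have hK2eq : (((2^n)^k * (2^n)^k : ℕ) : ℝ) = K2 := by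
      rw [hK2]; push_cast; ring
    rw [hK2eq]
    -- now a pure real inequality
    have hsumnn : (0:ℝ) ≤ ∑ j ∈ Finset.range N,
        Exp (bb (n-1) ((j:ℤ)-1) + bb (n-1) ((N:ℤ)-j-1)) :=
      Finset.sum_nonneg fun j _ => (hExpPos _).le
    have hIco : ∑ j ∈ Finset.Ico 1 N, Exp (bb (n-1) ((j:ℤ)-1) + bb (n-1) ((N:ℤ)-j-1))
        ≤ ∑ j ∈ Finset.range N, Exp (bb (n-1) ((j:ℤ)-1) + bb (n-1) ((N:ℤ)-j-1)) := by
      apply Finset.sum_le_sum_of_subset_of_nonneg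
      · intro j hj
        rw [Finset.mem_Ico] at hj
        rw [Finset.mem_range]
        omega
      · intro j _ _
        exact (hExpPos _).le
    have hBeq : B = (∑ j ∈ Finset.range N,
        Exp (bb (n-1) ((j:ℤ)-1) + bb (n-1) ((N:ℤ)-j-1))) + Exp (bb (n-1) ((N:ℤ)-1)) := by
      rw [hB, hExp]
    have hC : 2 * Exp (bb (n-1) ((N:ℤ)-1))
        + ∑ j ∈ Finset.Ico 1 N, Exp (bb (n-1) ((j:ℤ)-1) + bb (n-1) ((N:ℤ)-j-1))
        ≤ 2 * B := by
      rw [hBeq]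
      linarith [hIco, hsumnn]
    calc ((2^n : ℕ) : ℝ) * (K2 * (2 * Exp (bb (n-1) ((N:ℤ)-1))
          + ∑ j ∈ Finset.Ico 1 N, Exp (bb (n-1) ((j:ℤ)-1) + bb (n-1) ((N:ℤ)-j-1))))
        ≤ ((2^n : ℕ) : ℝ) * (K2 * (2 * B)) := by
          apply mul_le_mul_of_nonneg_left (mul_le_mul_of_nonneg_left hC hK2pos.le)
            (Nat.cast_nonneg _)
      _ = K2 * (2^(n+1) * B) := by
          push_cast
          try ring
  obtain ⟨ω, -, hω⟩ := Finset.exists_le_of_sum_le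
    (Finset.univ_nonempty (α := (Fin k → Vec n) × (Fin k → Vec n))) hsum
  exact ⟨ω, le_trans hω (le_of_eq (by rw [hB]))⟩

theorem select_norm_patched_code (x : ℝ) (hx : 0 < x) (N n : ℕ)
    (hN : 1 ≤ N) (hNn : N ≤ n) :
    ∃ S₀ S₁ T : Finset (Vec n),
      (∀ v ∈ S₀, v ⟨n - 1, by omega⟩ = false) ∧
      (∀ v ∈ S₁, v ⟨n - 1, by omega⟩ = true) ∧
      (S₀.card : ℝ) ≤ x * 2 ^ (n - 1) /
        ((bb (n - 1) ⌊((N : ℚ) - 1) / 2⌋ + bb (n - 1) (⌈((N : ℚ) - 1) / 2⌉ - 1) : ℕ) : ℝ) ∧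
      (S₁.card : ℝ) ≤ x * 2 ^ (n - 1) /
        ((bb (n - 1) ⌊((N : ℚ) - 1) / 2⌋ + bb (n - 1) (⌈((N : ℚ) - 1) / 2⌉ - 1) : ℕ) : ℝ) ∧
      -- T contains every vector missed by S = S₀ ∪ S₁ with respect to coordinate n
      (∀ v : Vec n, ¬ (dS v ↑S₀ + dS v ↑S₁ ≤ (N : ℕ∞)) → v ∈ T) ∧
      -- T is closed under flipping coordinate n
      (∀ v ∈ T, flipCoord v ⟨n - 1, by omega⟩ ∈ T) ∧
      -- (S₀ ∪ S₁, T) is a norm N-patched symmetric code with coordinate n acceptable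
      (∀ v : Vec n, (dS v ↑S₀ + dS v ↑S₁ ≤ (N : ℕ∞))
        ∨ (v ∈ T ∧ flipCoord v ⟨n - 1, by omega⟩ ∈ T)) ∧
      (T.card : ℝ) ≤
        2 ^ (n + 1) * ∑ i ∈ Finset.range N,
            Real.exp (-((Nat.floor (x * 2 ^ (n - 1) /
                ((bb (n - 1) ⌊((N : ℚ) - 1) / 2⌋
                  + bb (n - 1) (⌈((N : ℚ) - 1) / 2⌉ - 1) : ℕ) : ℝ)) : ℝ)
              * ((bb (n - 1) ((i : ℤ) - 1) + bb (n - 1) ((N : ℤ) - i - 1) : ℕ) : ℝ))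
              / 2 ^ (n - 1))
          + 2 ^ (n + 1) *
            Real.exp (-((Nat.floor (x * 2 ^ (n - 1) /
                ((bb (n - 1) ⌊((N : ℚ) - 1) / 2⌋
                  + bb (n - 1) (⌈((N : ℚ) - 1) / 2⌉ - 1) : ℕ) : ℝ)) : ℝ)
              * ((bb (n - 1) ((N : ℤ) - 1) : ℕ) : ℝ))
              / 2 ^ (n - 1)) := by
  classical
  have hn : 1 ≤ n := le_trans hN hNn
  set i₀ : Fin n := ⟨n - 1, by omega⟩ with hi₀
  set D : ℕ := (bb (n - 1) ⌊((N : ℚ) - 1) / 2⌋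
    + bb (n - 1) (⌈((N : ℚ) - 1) / 2⌉ - 1) : ℕ) with hD
  set cap : ℝ := x * 2 ^ (n - 1) / (D : ℝ) with hcap
  set k : ℕ := Nat.floor cap with hk
  obtain ⟨ω, hω⟩ := exists_good n N k hn hN i₀
  refine ⟨Finset.univ.image (fun j => Function.update (ω.1 j) i₀ false),
    Finset.univ.image (fun j => Function.update (ω.2 j) i₀ true),
    TT n N k i₀ ω, ?_, ?_, ?_, ?_, ?_, ?_, ?_, ?_⟩
  · intro v hv
    rw [Finset.mem_image] at hv
    obtain ⟨j, -, rfl⟩ := hv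
    exact Function.update_self _ _ _
  · intro v hv
    rw [Finset.mem_image] at hv
    obtain ⟨j, -, rfl⟩ := hv
    exact Function.update_self _ _ _
  · have hcapnn : 0 ≤ cap :=
      div_nonneg (mul_nonneg hx.le (by positivity)) (Nat.cast_nonneg _)
    calc ((Finset.univ.image (fun j => Function.update (ω.1 j) i₀ false)).card : ℝ)
        ≤ ((Finset.univ : Finset (Fin k)).card : ℝ) := by
          exact_mod_cast Finset.card_image_le
      _ = (k : ℝ) := by simp
      _ ≤ cap := Nat.floor_le hcapnn
  · have hcapnn : 0 ≤ cap :=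
      div_nonneg (mul_nonneg hx.le (by positivity)) (Nat.cast_nonneg _)
    calc ((Finset.univ.image (fun j => Function.update (ω.2 j) i₀ true)).card : ℝ)
        ≤ ((Finset.univ : Finset (Fin k)).card : ℝ) := by
          exact_mod_cast Finset.card_image_le
      _ = (k : ℝ) := by simp
      _ ≤ cap := Nat.floor_le hcapnn
  · intro v hv
    rw [dS_sum_le_iff] at hv
    exact mem_TT.2 hv
  · intro v hv
    have hv' := mem_TT.1 hv
    apply mem_TT.2
    rintro ⟨u, hu, w, hw, hle⟩
    apply hv'
    have hu0 : u i₀ = false := by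
      rw [Finset.mem_image] at hu
      obtain ⟨j, -, rfl⟩ := hu
      exact Function.update_self _ _ _
    have hw1 : w i₀ = true := by
      rw [Finset.mem_image] at hw
      obtain ⟨j, -, rfl⟩ := hw
      exact Function.update_self _ _ _
    refine ⟨u, hu, w, hw, ?_⟩
    rw [← flip_pair_sum v u w i₀ hu0 hw1]
    exact hle
  · intro v
    by_cases hd : dS v ↑(Finset.univ.image (fun j => Function.update (ω.1 j) i₀ false))
        + dS v ↑(Finset.univ.image (fun j => Function.update (ω.2 j) i₀ true)) ≤ (N : ℕ∞)
    · exact Or.inl hd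
    · right
      rw [dS_sum_le_iff] at hd
      have hvT : v ∈ TT n N k i₀ ω := mem_TT.2 hd
      refine ⟨hvT, ?_⟩
      apply mem_TT.2
      rintro ⟨u, hu, w, hw, hle⟩
      apply hd
      have hu0 : u i₀ = false := by
        rw [Finset.mem_image] at hu
        obtain ⟨j, -, rfl⟩ := hu
        exact Function.update_self _ _ _
      have hw1 : w i₀ = true := by
        rw [Finset.mem_image] at hw
        obtain ⟨j, -, rfl⟩ := hw
        exact Function.update_self _ _ _
      refine ⟨u, hu, w, hw, ?_⟩
      rw [← flip_pair_sum v u w i₀ hu0 hw1]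
      exact hle
  · refine le_trans hω (le_of_eq (by ring))
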